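/- arXiv:2103.16159 — 4 statements merged into one kernel-verified Lean document; each statement's English description precedes it below -/
import Mathlib

section
/- Let $S_0$ be a finite index set of size $N \geq 1$, and let $W_i$, $i \in S_0$, be real random variables. Suppose there exists $g \geq 0$ such that for every subset $A \subseteq S_0$, $\mathbb{P}\big(\bigcap_{i\in A}\{W_i > 0\} \cap \bigcap_{i\in S_0\setminus A}\{W_i < 0\}\big) \leq (1/2 + g)^{N}$. Then $\mathbb{E}\left[\dfrac{\sum_{i\in S_0}\mathbf{1}\{W_i > 0\}}{1 + \sum_{i\in S_0}\mathbf{1}\{W_i < 0\}}\right] \leq (1 + g)^{2N}$, provided $\mathbb{P}(W_i = 0) = 0$ for all $i$. -/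
open MeasureTheory

theorem stmt_3 {Ω : Type*} {m0 : MeasurableSpace Ω} (μ : Measure Ω)
    [IsProbabilityMeasure μ] {ι : Type*} [Fintype ι] (N : ℕ) (hN : 1 ≤ N)
    (hcard : Fintype.card ι = N) (W : ι → Ω → ℝ) (hWmeas : ∀ i, Measurable (W i))
    (g : ℝ) (hg : 0 ≤ g)
    (hsym : ∀ A : Finset ι,
      μ {ω | (∀ i ∈ A, 0 < W i ω) ∧ (∀ i ∉ A, W i ω < 0)} ≤
        ENNReal.ofReal ((1 / 2 + g) ^ N))
    (hzero : ∀ i, μ {ω | W i ω = 0} = 0) :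
    ∫ ω, (∑ i, if 0 < W i ω then (1 : ℝ) else 0) /
        (1 + ∑ i, if W i ω < 0 then (1 : ℝ) else 0) ∂μ ≤ (1 + g) ^ (2 * N) := by
  classical
  set E : Finset ι → Set Ω :=
    fun A => {ω | (∀ i ∈ A, 0 < W i ω) ∧ (∀ i ∉ A, W i ω < 0)} with hE
  have hEmeas : ∀ A, MeasurableSet (E A) := by
    intro A
    have heq : E A = ⋂ i, (if i ∈ A then {ω | 0 < W i ω} else {ω | W i ω < 0}) := by
      ext ω
      simp only [Set.mem_iInter, hE, Set.mem_setOf_eq]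
      constructor
      · rintro ⟨h1, h2⟩ i
        by_cases hi : i ∈ A <;> simp [hi, h1 i, h2 i]
      · intro h
        refine ⟨fun i hi => ?_, fun i hi => ?_⟩
        · simpa [hi] using h i
        · simpa [hi] using h i
    rw [heq]
    refine MeasurableSet.iInter fun i => ?_
    by_cases hi : i ∈ A
    · simpa [hi] using measurableSet_lt measurable_const (hWmeas i)
    · simpa [hi] using measurableSet_lt (hWmeas i) measurable_const
  set c : Finset ι → ℝ := fun A => (A.card : ℝ) / (1 + (Aᶜ.card : ℝ)) with hc
  have hcnonneg : ∀ A, 0 ≤ c A := fun A => div_nonneg (by positivity) (by positivity)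
  -- a.e. no zero values
  have hae : ∀ᵐ ω ∂μ, ∀ i, W i ω ≠ 0 := by
    rw [ae_all_iff]
    intro i
    have := hzero i
    simpa [ae_iff] using this
  -- pointwise identity off the null set
  have hpt : ∀ ω, (∀ i, W i ω ≠ 0) →
      (∑ i, if 0 < W i ω then (1 : ℝ) else 0) /
        (1 + ∑ i, if W i ω < 0 then (1 : ℝ) else 0)
      = ∑ B : Finset ι, (E B).indicator (fun _ => c B) ω := by
    intro ω hω
    set A : Finset ι := Finset.univ.filter (fun i => 0 < W i ω) with hA
    have hmemA : ∀ i, i ∈ A ↔ 0 < W i ω := by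
      intro i; simp [hA]
    have hmemAc : ∀ i, i ∉ A ↔ W i ω < 0 := by
      intro i
      rw [hmemA]
      constructor
      · intro h
        rcases (hω i).lt_or_gt with h' | h'
        · exact h'
        · exact absurd h' h
      · intro h h'
        exact lt_irrefl _ (h.trans h')
    have hωEA : ω ∈ E A := by
      refine ⟨fun i hi => (hmemA i).1 hi, fun i hi => (hmemAc i).1 hi⟩
    have hnum : (∑ i, if 0 < W i ω then (1 : ℝ) else 0) = A.card := by
      rw [hA, Finset.sum_boole]
    have hden : (∑ i, if W i ω < 0 then (1 : ℝ) else 0) = (Aᶜ).card := by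
      have : Finset.univ.filter (fun i => W i ω < 0) = Aᶜ := by
        ext i
        simp only [Finset.mem_filter, Finset.mem_univ, true_and, Finset.mem_compl]
        exact (hmemAc i).symm
      rw [Finset.sum_boole, this]
    rw [hnum, hden]
    rw [Finset.sum_eq_single_of_mem A (Finset.mem_univ A)]
    · rw [Set.indicator_of_mem hωEA]
    · intro B _ hBA
      refine Set.indicator_of_notMem ?_ _
      intro hωB
      apply hBA
      ext i
      rw [hmemA i]
      constructor
      · intro hi; exact hωB.1 i hi
      · intro hi
        by_contra hiB
        exact absurd (hωB.2 i hiB) (asymm hi)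
  -- integral computation
  have hint : ∫ ω, (∑ i, if 0 < W i ω then (1 : ℝ) else 0) /
        (1 + ∑ i, if W i ω < 0 then (1 : ℝ) else 0) ∂μ
      = ∑ B : Finset ι, (μ (E B)).toReal * c B := by
    have hcongr : ∫ ω, (∑ i, if 0 < W i ω then (1 : ℝ) else 0) /
        (1 + ∑ i, if W i ω < 0 then (1 : ℝ) else 0) ∂μ
        = ∫ ω, ∑ B : Finset ι, (E B).indicator (fun _ => c B) ω ∂μ := by
      refine integral_congr_ae ?_
      filter_upwards [hae] with ω hω
      exact hpt ω hω
    rw [hcongr, integral_finset_sum]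
    · refine Finset.sum_congr rfl fun B _ => ?_
      rw [integral_indicator_const _ (hEmeas B)]
      simp [smul_eq_mul]
      exact Or.inl rfl
    · intro B _
      exact (integrable_const (c B)).indicator (hEmeas B)
  rw [hint]
  -- bound each measure
  have hmeasb : ∀ B : Finset ι, (μ (E B)).toReal ≤ (1 / 2 + g) ^ N := by
    intro B
    refine ENNReal.toReal_le_of_le_ofReal (by positivity) (hsym B)
  have hbound : ∑ B : Finset ι, (μ (E B)).toReal * c B
      ≤ (∑ B : Finset ι, c B) * (1 / 2 + g) ^ N := by
    rw [Finset.sum_mul]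
    refine Finset.sum_le_sum fun B _ => ?_
    rw [mul_comm (c B)]
    exact mul_le_mul_of_nonneg_right (hmeasb B) (hcnonneg B)
  refine hbound.trans ?_
  -- compute the combinatorial sum
  set h : ℕ → ℝ := fun k => (k : ℝ) / (1 + ((N - k : ℕ) : ℝ)) with hh
  have hcsum : ∑ B : Finset ι, c B ≤ (2 : ℝ) ^ N := by
    have hcB : ∀ B : Finset ι, c B = h B.card := by
      intro B
      rw [hc, hh]
      simp [Finset.card_compl, hcard]
    have h1 : ∑ B : Finset ι, c B
        = ∑ j ∈ Finset.range (N + 1), (Fintype.card ι).choose j • h j := by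
      rw [← Finset.powerset_univ, Finset.sum_powerset]
      simp only [Finset.card_univ, hcard]
      refine Finset.sum_congr rfl fun j _ => ?_
      calc ∑ t ∈ Finset.powersetCard j (Finset.univ : Finset ι), c t
          = ∑ t ∈ Finset.powersetCard j (Finset.univ : Finset ι), h t.card :=
            Finset.sum_congr rfl fun t _ => hcB t
        _ = N.choose j • h j := by
            rw [Finset.sum_powersetCard]
            simp [Finset.card_univ, hcard]
    rw [h1, hcard]
    have hterm : ∀ i ∈ Finset.range N, N.choose (i + 1) • h (i + 1) = (N.choose i : ℝ) := by
      intro i hi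
      rw [Finset.mem_range] at hi
      have hiN : i + 1 ≤ N := hi
      have hsub : ((N - (i + 1) : ℕ) : ℝ) = (N : ℝ) - (i + 1) := by
        rw [Nat.cast_sub hiN]; push_cast; ring
      have hden : (1 : ℝ) + ((N - (i + 1) : ℕ) : ℝ) = (N : ℝ) - i := by
        rw [hsub]; ring
      have hpos : (0 : ℝ) < (N : ℝ) - i := by
        have : (i : ℝ) < N := by exact_mod_cast hi
        linarith
      have hkey : (N.choose (i + 1) : ℝ) * (i + 1) = (N.choose i : ℝ) * ((N : ℝ) - i) := by
        have := Nat.choose_succ_right_eq N i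
        have hNi : ((N - i : ℕ) : ℝ) = (N : ℝ) - i := by
          rw [Nat.cast_sub (le_of_lt hi)]
        calc (N.choose (i + 1) : ℝ) * (i + 1)
            = ((N.choose (i + 1) * (i + 1) : ℕ) : ℝ) := by push_cast; ring
          _ = ((N.choose i * (N - i) : ℕ) : ℝ) := by rw [this]
          _ = (N.choose i : ℝ) * ((N : ℝ) - i) := by push_cast [Nat.cast_sub (le_of_lt hi)]; ring
      rw [hh, nsmul_eq_mul]
      simp only [hden]
      push_cast
      field_simp
      linarith [hkey]
    calc ∑ j ∈ Finset.range (N + 1), N.choose j • h j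
        = (∑ i ∈ Finset.range N, N.choose (i + 1) • h (i + 1)) + N.choose 0 • h 0 := by
          rw [Finset.sum_range_succ']
      _ = ∑ i ∈ Finset.range N, (N.choose i : ℝ) := by
          rw [Finset.sum_congr rfl hterm]
          simp [hh]
      _ ≤ ∑ i ∈ Finset.range (N + 1), (N.choose i : ℝ) := by
          refine Finset.sum_le_sum_of_subset_of_nonneg
            (Finset.range_subset_range.2 (Nat.le_succ N)) ?_
          intro i _ _; positivity
      _ = (2 : ℝ) ^ N := by
          rw [← Nat.cast_sum]
          rw [Nat.sum_range_choose]
          push_cast; ring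
  have hfinal : (2 : ℝ) ^ N * (1 / 2 + g) ^ N ≤ (1 + g) ^ (2 * N) := by
    rw [← mul_pow, pow_mul]
    refine pow_le_pow_left₀ (by linarith) ?_ N
    nlinarith
  calc (∑ B : Finset ι, c B) * (1 / 2 + g) ^ N
      ≤ (2 : ℝ) ^ N * (1 / 2 + g) ^ N := by
        refine mul_le_mul_of_nonneg_right hcsum (by positivity)
    _ ≤ (1 + g) ^ (2 * N) := hfinal
end

section
/- Let $W_1,\ldots,W_m$ be real random variables, $S_0 \subseteq \{1,\ldots,m\}$, and let $T > 0$ and $q \in (0,1)$ be constants such that almost surely $\sum_{i=1}^m \mathbf{1}\{W_i \leq -T\} \leq q \sum_{i=1}^m \mathbf{1}\{W_i \geq T\}$. Then $\mathbb{E}\left[\dfrac{\sum_{i\in S_0}\mathbf{1}\{W_i \geq T\}}{\sum_{i=1}^m \mathbf{1}\{W_i \geq T\} + q^{-1}}\right] \leq q\, \mathbb{E}\left[\dfrac{\sum_{i\in S_0}\mathbf{1}\{W_i \geq T\}}{1 + \sum_{i\in S_0}\mathbf{1}\{W_i \leq -T\}}\right]$. -/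
open MeasureTheory

theorem stmt_6 {Ω : Type*} {m0 : MeasurableSpace Ω} (μ : Measure Ω)
    [IsProbabilityMeasure μ] (m : ℕ) (W : Fin m → Ω → ℝ)
    (hWmeas : ∀ i, Measurable (W i)) (S0 : Finset (Fin m))
    (T q : ℝ) (hT : 0 < T) (hq0 : 0 < q) (hq1 : q < 1)
    (hthresh : ∀ᵐ ω ∂μ,
      (∑ i, if W i ω ≤ -T then (1 : ℝ) else 0) ≤ q * ∑ i, if T ≤ W i ω then (1 : ℝ) else 0) :
    ∫ ω, (∑ i ∈ S0, if T ≤ W i ω then (1 : ℝ) else 0) /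
        ((∑ i, if T ≤ W i ω then (1 : ℝ) else 0) + q⁻¹) ∂μ ≤
      q * ∫ ω, (∑ i ∈ S0, if T ≤ W i ω then (1 : ℝ) else 0) /
        (1 + ∑ i ∈ S0, if W i ω ≤ -T then (1 : ℝ) else 0) ∂μ := by
  set A : Ω → ℝ := fun ω => ∑ i ∈ S0, if T ≤ W i ω then (1 : ℝ) else 0 with hA
  set B : Ω → ℝ := fun ω => ∑ i, if T ≤ W i ω then (1 : ℝ) else 0 with hB
  set C : Ω → ℝ := fun ω => ∑ i ∈ S0, if W i ω ≤ -T then (1 : ℝ) else 0 with hC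
  set D : Ω → ℝ := fun ω => ∑ i, if W i ω ≤ -T then (1 : ℝ) else 0 with hD
  have hAnn : ∀ ω, 0 ≤ A ω := fun ω =>
    Finset.sum_nonneg fun i _ => by positivity
  have hBnn : ∀ ω, 0 ≤ B ω := fun ω =>
    Finset.sum_nonneg fun i _ => by positivity
  have hCnn : ∀ ω, 0 ≤ C ω := fun ω =>
    Finset.sum_nonneg fun i _ => by positivity
  have hCD : ∀ ω, C ω ≤ D ω := fun ω =>
    Finset.sum_le_sum_of_subset_of_nonneg (Finset.subset_univ S0)
      (fun i _ _ => by positivity)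
  have hAm : ∀ ω, A ω ≤ m := by
    intro ω
    calc A ω ≤ ∑ i ∈ S0, (1 : ℝ) := Finset.sum_le_sum fun i _ => by split <;> norm_num
    _ = S0.card := by simp
    _ ≤ ((Finset.univ : Finset (Fin m)).card : ℝ) := by
        exact_mod_cast Finset.card_le_card (Finset.subset_univ S0)
    _ = m := by simp
  have hmeasA : Measurable A := by
    apply Finset.measurable_sum
    intro i _
    exact Measurable.ite (measurableSet_le measurable_const (hWmeas i))
      measurable_const measurable_const
  have hmeasB : Measurable B := by
    apply Finset.measurable_sum
    intro i _
    exact Measurable.ite (measurableSet_le measurable_const (hWmeas i))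
      measurable_const measurable_const
  have hmeasC : Measurable C := by
    apply Finset.measurable_sum
    intro i _
    exact Measurable.ite (measurableSet_le (hWmeas i) measurable_const)
      measurable_const measurable_const
  have hq0' : (0:ℝ) < q⁻¹ := by positivity
  have hden1 : ∀ ω, 0 < B ω + q⁻¹ := fun ω => by
    have := hBnn ω; linarith
  have hden2 : ∀ ω, 0 < 1 + C ω := fun ω => by
    have := hCnn ω; linarith
  have hmeas1 : Measurable (fun ω => A ω / (B ω + q⁻¹)) :=
    hmeasA.div (hmeasB.add measurable_const)
  have hmeas2 : Measurable (fun ω => A ω / (1 + C ω)) :=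
    hmeasA.div (measurable_const.add hmeasC)
  have hbd1 : ∀ ω, ‖A ω / (B ω + q⁻¹)‖ ≤ m := by
    intro ω
    rw [Real.norm_eq_abs, abs_of_nonneg (div_nonneg (hAnn ω) (hden1 ω).le)]
    have h1 : A ω / (B ω + q⁻¹) ≤ A ω / q⁻¹ :=
      div_le_div_of_nonneg_left (hAnn ω) hq0' (by have := hBnn ω; linarith)
    have h2 : A ω / q⁻¹ = A ω * q := by field_simp
    nlinarith [hAm ω, hAnn ω]
  have hbd2 : ∀ ω, ‖A ω / (1 + C ω)‖ ≤ m := by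
    intro ω
    rw [Real.norm_eq_abs, abs_of_nonneg (div_nonneg (hAnn ω) (hden2 ω).le)]
    have h1 : A ω / (1 + C ω) ≤ A ω / 1 :=
      div_le_div_of_nonneg_left (hAnn ω) one_pos (by have := hCnn ω; linarith)
    rw [div_one] at h1
    linarith [hAm ω]
  have hint1 : Integrable (fun ω => A ω / (B ω + q⁻¹)) μ :=
    (integrable_const (m:ℝ)).mono' hmeas1.aestronglyMeasurable
      (Filter.Eventually.of_forall hbd1)
  have hint2 : Integrable (fun ω => A ω / (1 + C ω)) μ :=
    (integrable_const (m:ℝ)).mono' hmeas2.aestronglyMeasurable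
      (Filter.Eventually.of_forall hbd2)
  have hptwise : ∀ᵐ ω ∂μ, A ω / (B ω + q⁻¹) ≤ q * (A ω / (1 + C ω)) := by
    filter_upwards [hthresh] with ω hω
    have hDqB : D ω ≤ q * B ω := hω
    have h1C : 1 + C ω ≤ q * (B ω + q⁻¹) := by
      have := hCD ω
      have : C ω ≤ q * B ω := le_trans this hDqB
      have hq : q * q⁻¹ = 1 := mul_inv_cancel₀ hq0.ne'
      nlinarith
    have key : q * A ω / (q * (B ω + q⁻¹)) ≤ q * A ω / (1 + C ω) :=
      div_le_div_of_nonneg_left (by positivity) (hden2 ω) h1C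
    rw [mul_div_mul_left _ _ hq0.ne'] at key
    rw [mul_div_assoc] at key
    exact key
  calc ∫ ω, A ω / (B ω + q⁻¹) ∂μ ≤ ∫ ω, q * (A ω / (1 + C ω)) ∂μ :=
        integral_mono_ae hint1 (hint2.const_mul q) hptwise
  _ = q * ∫ ω, A ω / (1 + C ω) ∂μ := integral_const_mul q _
end

section
/- Let $W_1,\ldots,W_m$ be real random variables, $S_0 \subseteq \{1,\ldots,m\}$, and let $T > 0$ and $q\in(0,1)$ satisfy almost surely $1 + \sum_{i=1}^m \mathbf{1}\{W_i \leq -T\} \leq q\,\max\big(1, \sum_{i=1}^m \mathbf{1}\{W_i \geq T\}\big)$. Then $\mathbb{E}\left[\dfrac{\sum_{i\in S_0}\mathbf{1}\{W_i \geq T\}}{\max(1,\sum_{i=1}^m \mathbf{1}\{W_i \geq T\})}\right] \leq q\,\mathbb{E}\left[\dfrac{\sum_{i\in S_0}\mathbf{1}\{W_i \geq T\}}{1 + \sum_{i\in S_0}\mathbf{1}\{W_i \leq -T\}}\right]$. -/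
open MeasureTheory

theorem stmt_7 {Ω : Type*} {m0 : MeasurableSpace Ω} (μ : Measure Ω)
    [IsProbabilityMeasure μ] (m : ℕ) (W : Fin m → Ω → ℝ)
    (hWmeas : ∀ i, Measurable (W i)) (S0 : Finset (Fin m))
    (T q : ℝ) (hT : 0 < T) (hq0 : 0 < q) (hq1 : q < 1)
    (hthresh : ∀ᵐ ω ∂μ,
      1 + (∑ i, if W i ω ≤ -T then (1 : ℝ) else 0) ≤
        q * max 1 (∑ i, if T ≤ W i ω then (1 : ℝ) else 0)) :
    ∫ ω, (∑ i ∈ S0, if T ≤ W i ω then (1 : ℝ) else 0) /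
        max 1 (∑ i, if T ≤ W i ω then (1 : ℝ) else 0) ∂μ ≤
      q * ∫ ω, (∑ i ∈ S0, if T ≤ W i ω then (1 : ℝ) else 0) /
        (1 + ∑ i ∈ S0, if W i ω ≤ -T then (1 : ℝ) else 0) ∂μ := by
  set N : Ω → ℝ := fun ω => ∑ i ∈ S0, if T ≤ W i ω then (1 : ℝ) else 0 with hNdef
  set P : Ω → ℝ := fun ω => ∑ i, if T ≤ W i ω then (1 : ℝ) else 0 with hPdef
  set M : Ω → ℝ := fun ω => ∑ i ∈ S0, if W i ω ≤ -T then (1 : ℝ) else 0 with hMdef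
  have hNmeas : Measurable N :=
    Finset.measurable_sum _ fun i _ =>
      Measurable.ite (measurableSet_le measurable_const (hWmeas i)) measurable_const
        measurable_const
  have hPmeas : Measurable P :=
    Finset.measurable_sum _ fun i _ =>
      Measurable.ite (measurableSet_le measurable_const (hWmeas i)) measurable_const
        measurable_const
  have hMmeas : Measurable M :=
    Finset.measurable_sum _ fun i _ =>
      Measurable.ite (measurableSet_le (hWmeas i) measurable_const) measurable_const
        measurable_const
  have hN0 : ∀ ω, 0 ≤ N ω := fun ω =>
    Finset.sum_nonneg fun i _ => by positivity
  have hM0 : ∀ ω, 0 ≤ M ω := fun ω =>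
    Finset.sum_nonneg fun i _ => by positivity
  have hNcard : ∀ ω, N ω ≤ S0.card := fun ω => by
    calc N ω ≤ ∑ i ∈ S0, (1 : ℝ) := Finset.sum_le_sum fun i _ => by split <;> norm_num
      _ = S0.card := by simp
  have hNP : ∀ ω, N ω ≤ P ω := fun ω =>
    Finset.sum_le_sum_of_subset_of_nonneg (Finset.subset_univ S0)
      (fun i _ _ => by positivity)
  have hMall : ∀ ω, M ω ≤ ∑ i, if W i ω ≤ -T then (1 : ℝ) else 0 := fun ω =>
    Finset.sum_le_sum_of_subset_of_nonneg (Finset.subset_univ S0)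
      (fun i _ _ => by positivity)
  have hDen1 : ∀ ω, (1 : ℝ) ≤ max 1 (P ω) := fun ω => le_max_left _ _
  have hDen2 : ∀ ω, (1 : ℝ) ≤ 1 + M ω := fun ω => by linarith [hM0 ω]
  -- integrability
  have hint1 : Integrable (fun ω => N ω / max 1 (P ω)) μ := by
    refine Integrable.mono' (integrable_const (1 : ℝ))
      ((hNmeas.div (measurable_const.max hPmeas)).aestronglyMeasurable)
      (Filter.Eventually.of_forall fun ω => ?_)
    rw [Real.norm_eq_abs, abs_of_nonneg (div_nonneg (hN0 ω) (by linarith [hDen1 ω]))]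
    exact div_le_one_of_le₀ (le_trans (hNP ω) (le_max_right _ _)) (by linarith [hDen1 ω])
  have hint2 : Integrable (fun ω => N ω / (1 + M ω)) μ := by
    refine Integrable.mono' (integrable_const (S0.card : ℝ))
      ((hNmeas.div (measurable_const.add hMmeas)).aestronglyMeasurable)
      (Filter.Eventually.of_forall fun ω => ?_)
    rw [Real.norm_eq_abs, abs_of_nonneg (div_nonneg (hN0 ω) (by linarith [hDen2 ω]))]
    calc N ω / (1 + M ω) ≤ N ω / 1 :=
          div_le_div_of_nonneg_left (hN0 ω) one_pos (hDen2 ω)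
      _ ≤ S0.card := by simpa using hNcard ω
  have hae : ∀ᵐ ω ∂μ,
      N ω / max 1 (P ω) ≤ q * (N ω / (1 + M ω)) := by
    filter_upwards [hthresh] with ω h
    have hD1 : (0 : ℝ) < max 1 (P ω) := lt_of_lt_of_le one_pos (hDen1 ω)
    have hD2 : (0 : ℝ) < 1 + M ω := lt_of_lt_of_le one_pos (hDen2 ω)
    have hkey : 1 + M ω ≤ q * max 1 (P ω) := le_trans (by linarith [hMall ω]) h
    rw [mul_div_assoc', div_le_div_iff₀ hD1 hD2]
    nlinarith [hN0 ω, mul_le_mul_of_nonneg_left hkey (hN0 ω)]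
  calc ∫ ω, N ω / max 1 (P ω) ∂μ
      ≤ ∫ ω, q * (N ω / (1 + M ω)) ∂μ :=
        integral_mono_ae hint1 (hint2.const_mul q) hae
    _ = q * ∫ ω, N ω / (1 + M ω) ∂μ := integral_const_mul q _
end

section
/- Let $F : \mathbb{R}^p \times \mathbb{R}^m \to \mathbb{R}$ be convex and differentiable, $\lambda > 0$, and suppose $(\hat\beta, \hat\gamma)$ minimizes $F(\beta,\gamma) + \lambda\|\gamma\|_1$ with subgradient certificate $\hat\rho \in \partial\|\hat\gamma\|_1$ satisfying $\nabla_\beta F(\hat\beta,\hat\gamma) = 0$, $\nabla_\gamma F(\hat\beta,\hat\gamma) = -\lambda\hat\rho$, and $|\hat\rho_j| < 1$ strictly for all $j$ in a set $S_0$. If $(\tilde\beta,\tilde\gamma)$ is any other minimizer of the same objective, then $\tilde\gamma_j = 0$ for all $j \in S_0$. -/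
/-- Convexity plus differentiability gives the gradient inequality
`L (y - x) ≤ f y - f x`. -/
lemma grad_ineq {E : Type*} [NormedAddCommGroup E] [NormedSpace ℝ E]
    (f : E → ℝ) (hf : ConvexOn ℝ Set.univ f) (x y : E) (L : E →L[ℝ] ℝ)
    (hd : HasFDerivAt f L x) : L (y - x) ≤ f y - f x := by
  set d : E := y - x with hdd
  have hline : HasDerivAt (fun t : ℝ => x + t • d) d 0 := by
    simpa using ((hasDerivAt_id (0 : ℝ)).smul_const d).const_add x
  have hg : HasDerivAt (fun t : ℝ => f (x + t • d)) (L d) 0 := by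
    have hd' : HasFDerivAt f L (x + (0:ℝ) • d) := by simpa using hd
    have := hd'.comp_hasDerivAt 0 hline
    exact this
  have htend : Filter.Tendsto (slope (fun t : ℝ => f (x + t • d)) 0)
      (nhdsWithin 0 (Set.Ioi 0)) (nhds (L d)) := by
    have := hasDerivAt_iff_tendsto_slope.mp hg
    exact this.mono_left (nhdsWithin_mono _ (by intro t ht; exact ne_of_gt ht))
  refine le_of_tendsto htend ?_
  filter_upwards [Ioo_mem_nhdsGT_of_mem (by norm_num : (0:ℝ) ∈ Set.Ico 0 1)] with t ht
  obtain ⟨ht0, ht1⟩ := ht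
  have hconvpt : f (x + t • d) ≤ (1 - t) * f x + t * f y := by
    obtain ⟨-, hcv⟩ := hf
    have := hcv (x := x) (y := y) (Set.mem_univ x) (Set.mem_univ y)
      (a := 1 - t) (b := t) (by linarith) (by linarith) (by ring)
    have hxy : (1 - t) • x + t • y = x + t • d := by
      simp [hdd, smul_sub, sub_smul]; abel
    calc f (x + t • d) = f ((1 - t) • x + t • y) := by rw [hxy]
      _ ≤ (1 - t) * f x + t * f y := by simpa [smul_eq_mul] using this
  rw [slope_def_field]
  rw [div_le_iff₀ (by simpa using ht0)]
  have h0 : f (x + (0:ℝ) • d) = f x := by simp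
  rw [sub_zero, h0]
  nlinarith

theorem stmt_14 (p m : ℕ) (F : (Fin p → ℝ) → (Fin m → ℝ) → ℝ)
    (hconv : ConvexOn ℝ Set.univ (fun q : (Fin p → ℝ) × (Fin m → ℝ) => F q.1 q.2))
    (lam : ℝ) (hlam : 0 < lam)
    (βh : Fin p → ℝ) (γh : Fin m → ℝ) (ρh : Fin m → ℝ)
    (L : ((Fin p → ℝ) × (Fin m → ℝ)) →L[ℝ] ℝ)
    (hderiv : HasFDerivAt (fun q : (Fin p → ℝ) × (Fin m → ℝ) => F q.1 q.2) L (βh, γh))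
    (hL : ∀ q : (Fin p → ℝ) × (Fin m → ℝ), L q = -lam * ∑ i, ρh i * q.2 i)
    (hρ_bdd : ∀ i, |ρh i| ≤ 1) (hρ_dual : ∑ i, ρh i * γh i = ∑ i, |γh i|)
    (S0 : Finset (Fin m)) (hρ_strict : ∀ j ∈ S0, |ρh j| < 1)
    (hmin : ∀ (β : Fin p → ℝ) (γ : Fin m → ℝ),
      F βh γh + lam * ∑ i, |γh i| ≤ F β γ + lam * ∑ i, |γ i|)
    (βt : Fin p → ℝ) (γt : Fin m → ℝ)
    (hmin' : F βt γt + lam * ∑ i, |γt i| = F βh γh + lam * ∑ i, |γh i|) :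
    ∀ j ∈ S0, γt j = 0 := by
  have hgi := grad_ineq _ hconv (βh, γh) (βt, γt) L hderiv
  have hLval : L ((βt, γt) - (βh, γh)) =
      -lam * ∑ i, ρh i * (γt i - γh i) := by
    rw [hL]; rfl
  have hFdiff : F βt γt - F βh γh = lam * ∑ i, |γh i| - lam * ∑ i, |γt i| := by
    linarith
  have key : ∑ i, |γt i| ≤ ∑ i, ρh i * γt i := by
    have h1 : -lam * ∑ i, ρh i * (γt i - γh i) ≤
        lam * ∑ i, |γh i| - lam * ∑ i, |γt i| := by
      rw [← hLval, ← hFdiff]; exact hgi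
    have hsplit : ∑ i, ρh i * (γt i - γh i)
        = (∑ i, ρh i * γt i) - ∑ i, ρh i * γh i := by
      rw [← Finset.sum_sub_distrib]; congr 1; ext i; ring
    rw [hsplit, hρ_dual] at h1
    have := (mul_le_mul_iff_right₀ hlam).mp (by nlinarith : lam * ∑ i, |γt i| ≤ lam * ∑ i, ρh i * γt i)
    exact this
  have hterm : ∀ i : Fin m, ρh i * γt i ≤ |γt i| := by
    intro i
    calc ρh i * γt i ≤ |ρh i * γt i| := le_abs_self _
      _ = |ρh i| * |γt i| := abs_mul _ _
      _ ≤ 1 * |γt i| := by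
          exact mul_le_mul_of_nonneg_right (hρ_bdd i) (abs_nonneg _)
      _ = |γt i| := one_mul _
  have heq : ∀ i ∈ Finset.univ, ρh i * γt i = |γt i| := by
    have hle : ∑ i, ρh i * γt i ≤ ∑ i, |γt i| :=
      Finset.sum_le_sum fun i _ => hterm i
    have hsumeq : ∑ i, ρh i * γt i = ∑ i, |γt i| := le_antisymm hle key
    intro i hi
    by_contra hne
    have hlt : ρh i * γt i < |γt i| := lt_of_le_of_ne (hterm i) hne
    have : ∑ j, ρh j * γt j < ∑ j, |γt j| :=
      Finset.sum_lt_sum (fun j _ => hterm j) ⟨i, hi, hlt⟩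
    linarith [hsumeq]
  intro j hj
  by_contra hne
  have habs : 0 < |γt j| := abs_pos.mpr hne
  have : |γt j| = ρh j * γt j := (heq j (Finset.mem_univ j)).symm
  have hlt : ρh j * γt j < |γt j| := by
    calc ρh j * γt j ≤ |ρh j| * |γt j| := by
          rw [← abs_mul]; exact le_abs_self _
      _ < 1 * |γt j| := mul_lt_mul_of_pos_right (hρ_strict j hj) habs
      _ = |γt j| := one_mul _
  linarith
end
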